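/- arXiv:1608.01570 — 5 statements merged into one kernel-verified Lean document; each statement's English description precedes it below -/
import Mathlib

section
/- Let F be a free group with basis S and x ∈ S. If g ∈ F satisfies g x^z g⁻¹ ∈ ⟨x⟩ for some nonzero integer z, then g ∈ ⟨x⟩. In particular, the maximal cyclic subgroup ⟨x⟩ generated by a basis element is self-normalizing in F. -/
namespace Stmt2Aux

open FreeGroup List

variable {S : Type*} [DecidableEq S]

/-- The non-cancellation relation on letters. -/
def R : (S × Bool) → (S × Bool) → Prop := fun a b => ¬(a.1 = b.1 ∧ a.2 = !b.2)

lemma chain'_reduce (L : List (S × Bool)) : List.Chain' R (FreeGroup.reduce L) := by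
  induction L with
  | nil => exact List.isChain_nil
  | cons a L ih =>
    rw [FreeGroup.reduce.cons]
    rcases hL : FreeGroup.reduce L with _ | ⟨b, t⟩
    · exact List.isChain_singleton _
    · rw [hL] at ih
      by_cases hc : a.1 = b.1 ∧ a.2 = !b.2
      · simp only [if_pos hc]
        exact ih.tail
      · simp only [if_neg hc]
        exact List.isChain_cons_cons.mpr ⟨hc, ih⟩

lemma reduce_eq_self_of_chain' {L : List (S × Bool)} (h : List.Chain' R L) :
    FreeGroup.reduce L = L := by
  induction L with
  | nil => rfl
  | cons a L ih =>
    have hL : FreeGroup.reduce L = L := ih h.tail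
    rw [FreeGroup.reduce.cons, hL]
    cases L with
    | nil => rfl
    | cons b t =>
      have : R a b := (List.isChain_cons_cons.mp h).1
      simp only [if_neg this]

lemma chain'_toWord (g : FreeGroup S) : List.Chain' R g.toWord := by
  rw [← FreeGroup.reduce_toWord]
  exact chain'_reduce _

lemma toWord_mk_of_chain' {L : List (S × Bool)} (h : List.Chain' R L) :
    (FreeGroup.mk L).toWord = L := by
  rw [FreeGroup.toWord_mk, reduce_eq_self_of_chain' h]

lemma zpow_word (x : S) (z : ℤ) :
    ∃ c, ((FreeGroup.of x : FreeGroup S) ^ z).toWord = List.replicate z.natAbs (x, c) := by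
  rcases le_or_gt 0 z with hzn | hzn
  · refine ⟨true, ?_⟩
    obtain ⟨n, rfl⟩ := Int.eq_ofNat_of_zero_le hzn
    rw [zpow_natCast, FreeGroup.toWord_of_pow, Int.natAbs_natCast]
  · refine ⟨false, ?_⟩
    obtain ⟨n, rfl⟩ : ∃ n : ℕ, z = -n := ⟨z.natAbs, by omega⟩
    rw [zpow_neg, zpow_natCast, FreeGroup.toWord_inv, FreeGroup.toWord_of_pow]
    simp [FreeGroup.invRev]

lemma mk_single_mem (x : S) (b : Bool) :
    FreeGroup.mk [(x, b)] ∈ Subgroup.zpowers (FreeGroup.of x) := by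
  have hof : (FreeGroup.of x : FreeGroup S) = FreeGroup.mk [(x, true)] := by
    rw [← FreeGroup.mk_toWord (x := FreeGroup.of x), FreeGroup.toWord_of]
  cases b
  · have : FreeGroup.mk [(x, false)] = (FreeGroup.of x : FreeGroup S)⁻¹ := by
      rw [hof, FreeGroup.inv_mk]
      simp [FreeGroup.invRev]
    rw [this]
    exact inv_mem (Subgroup.mem_zpowers _)
  · rw [← hof]
    exact Subgroup.mem_zpowers _

lemma main (x : S) : ∀ n (g : FreeGroup S), g.toWord.length ≤ n → ∀ z : ℤ, z ≠ 0 →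
    g * FreeGroup.of x ^ z * g⁻¹ ∈ Subgroup.zpowers (FreeGroup.of x) →
    g ∈ Subgroup.zpowers (FreeGroup.of x) := by
  intro n
  induction n with
  | zero =>
    intro g hg z _ _
    have : g = 1 := FreeGroup.toWord_eq_nil_iff.mp (List.length_eq_zero_iff.mp (Nat.le_zero.mp hg))
    exact this ▸ one_mem _
  | succ n ih =>
    intro g hg z hz h
    rcases hl : g.toWord with _ | ⟨a, L⟩
    · exact (FreeGroup.toWord_eq_nil_iff.mp hl) ▸ one_mem _
    have hch : List.Chain' R (a :: L) := hl ▸ chain'_toWord g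
    by_cases hax : a.1 = x
    · -- peel a power of x from the front
      have hLred : (FreeGroup.mk L).toWord = L := toWord_mk_of_chain' hch.tail
      have hgdec : g = FreeGroup.mk [a] * FreeGroup.mk L := by
        rw [FreeGroup.mul_mk, List.singleton_append, ← hl, FreeGroup.mk_toWord]
      have ha : a = (x, a.2) := Prod.ext hax rfl
      have hmema : FreeGroup.mk [a] ∈ Subgroup.zpowers (FreeGroup.of x) := by
        rw [ha]; exact mk_single_mem x a.2
      have h₁ : FreeGroup.mk L * FreeGroup.of x ^ z * (FreeGroup.mk L)⁻¹ ∈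
          Subgroup.zpowers (FreeGroup.of x) := by
        have heq : FreeGroup.mk L * FreeGroup.of x ^ z * (FreeGroup.mk L)⁻¹ =
            (FreeGroup.mk [a])⁻¹ * (g * FreeGroup.of x ^ z * g⁻¹) * FreeGroup.mk [a] := by
          rw [hgdec]; group
        rw [heq]
        exact mul_mem (mul_mem (inv_mem hmema) h) hmema
      have hlen : (FreeGroup.mk L).toWord.length ≤ n := by
        rw [hLred]
        have h2 := hg; rw [hl, List.length_cons] at h2
        omega
      exact hgdec ▸ mul_mem hmema (ih _ hlen z hz h₁)
    · set b := (a :: L).getLast (List.cons_ne_nil a L) with hb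
      have hsplit : (a :: L).dropLast ++ [b] = a :: L :=
        List.dropLast_append_getLast (List.cons_ne_nil a L)
      by_cases hbx : b.1 = x
      · -- peel a power of x from the back
        set M := (a :: L).dropLast with hM
        have hchM : List.Chain' R M := hch.dropLast
        have hMred : (FreeGroup.mk M).toWord = M := toWord_mk_of_chain' hchM
        have hgdec : g = FreeGroup.mk M * FreeGroup.mk [b] := by
          rw [FreeGroup.mul_mk, hsplit, ← hl, FreeGroup.mk_toWord]
        have hbb : b = (x, b.2) := Prod.ext hbx rfl
        have hmemb : FreeGroup.mk [b] ∈ Subgroup.zpowers (FreeGroup.of x) := by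
          rw [hbb]; exact mk_single_mem x b.2
        obtain ⟨k, hk⟩ := hmemb
        have hcomm : FreeGroup.mk [b] * FreeGroup.of x ^ z * (FreeGroup.mk [b])⁻¹ =
            FreeGroup.of x ^ z := by
          rw [← hk, ← zpow_add, add_comm, zpow_add, mul_assoc, mul_inv_cancel, mul_one]
        have h₁ : FreeGroup.mk M * FreeGroup.of x ^ z * (FreeGroup.mk M)⁻¹ ∈
            Subgroup.zpowers (FreeGroup.of x) := by
          have heq : g * FreeGroup.of x ^ z * g⁻¹ =
              FreeGroup.mk M * (FreeGroup.mk [b] * FreeGroup.of x ^ z * (FreeGroup.mk [b])⁻¹) *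
                (FreeGroup.mk M)⁻¹ := by
            rw [hgdec]; group
          rw [hcomm] at heq
          rwa [heq] at h
        have hlen : (FreeGroup.mk M).toWord.length ≤ n := by
          rw [hMred, hM]
          have h2 := hg; rw [hl, List.length_cons] at h2
          simp only [List.length_dropLast, List.length_cons]
          omega
        have hMmem := ih _ hlen z hz h₁
        rw [hgdec, hbb]
        exact mul_mem hMmem (mk_single_mem x b.2)
      · -- both ends avoid x : contradiction
        exfalso
        obtain ⟨w, hw⟩ := h
        obtain ⟨c, hc⟩ := zpow_word (S := S) x z
        obtain ⟨c', hc'⟩ := zpow_word (S := S) x w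
        have hinv : g⁻¹.toWord = FreeGroup.invRev (a :: L) := by
          rw [FreeGroup.toWord_inv, hl]
        have hchinv : List.Chain' R (FreeGroup.invRev (a :: L)) := hinv ▸ chain'_toWord g⁻¹
        have hnz : z.natAbs ≠ 0 := Int.natAbs_ne_zero.mpr hz
        obtain ⟨m, hm⟩ : ∃ m, z.natAbs = m + 1 := ⟨z.natAbs - 1, by omega⟩
        have hinvhead : FreeGroup.invRev (a :: L) =
            (b.1, !b.2) :: FreeGroup.invRev (a :: L).dropLast := by
          conv_lhs => rw [← hsplit]
          simp [FreeGroup.invRev]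
        -- the concatenated word is reduced
        set rep := List.replicate z.natAbs ((x, c) : S × Bool) with hrep
        have hchW : List.Chain' R ((a :: L) ++ (rep ++ FreeGroup.invRev (a :: L))) := by
          apply List.isChain_append.mpr
          refine ⟨hch, ?_, ?_⟩
          · apply List.isChain_append.mpr
            refine ⟨List.isChain_replicate_of_rel _ (by simp [R]), hchinv, ?_⟩
            intro p hp q hq
            have hpc : p = (x, c) := List.eq_of_mem_replicate (List.mem_of_mem_getLast? hp)
            rw [hinvhead] at hq
            simp only [List.head?_cons, Option.mem_def, Option.some.injEq] at hq
            subst hpc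
            rw [← hq]
            exact fun hc2 => hbx hc2.1.symm
          · intro p hp q hq
            have hpb : p = b := by
              rw [← hsplit, List.getLast?_append_of_ne_nil _ (by simp)] at hp
              exact (by simpa using hp : b = p).symm
            have hq' : q = (x, c) := by
              rw [hrep, hm, List.replicate_succ, List.cons_append] at hq
              simp only [List.head?_cons, Option.mem_def, Option.some.injEq] at hq
              exact hq.symm
            subst hpb hq'
            exact fun hc2 => hbx hc2.1
        have hWeq : (g * FreeGroup.of x ^ z * g⁻¹).toWord =
            (a :: L) ++ (rep ++ FreeGroup.invRev (a :: L)) := by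
          have hmkeq : g * FreeGroup.of x ^ z * g⁻¹ =
              FreeGroup.mk ((a :: L) ++ (rep ++ FreeGroup.invRev (a :: L))) := by
            have e1 : g = FreeGroup.mk (a :: L) := by rw [← hl, FreeGroup.mk_toWord]
            have e2 : FreeGroup.of x ^ z = FreeGroup.mk rep := by
              rw [← hc, FreeGroup.mk_toWord]
            have e3 : g⁻¹ = FreeGroup.mk (FreeGroup.invRev (a :: L)) := by
              rw [← hinv, FreeGroup.mk_toWord]
            rw [e3, e1, e2, FreeGroup.mul_mk, FreeGroup.mul_mk, List.append_assoc]
          rw [hmkeq, FreeGroup.toWord_mk, reduce_eq_self_of_chain' hchW]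
        rw [← hw, hc'] at hWeq
        -- compare heads
        cases hwn : w.natAbs with
        | zero =>
          rw [hwn] at hWeq
          simp at hWeq
        | succ k =>
          rw [hwn, List.replicate_succ] at hWeq
          simp only [List.cons_append] at hWeq
          injection hWeq with h1 _
          exact hax (congrArg Prod.fst h1).symm

end Stmt2Aux

/-- In a free group, if `g x^z g⁻¹ ∈ ⟨x⟩` for a basis element `x` and `z ≠ 0`,
then `g ∈ ⟨x⟩`; in particular `⟨x⟩` is self-normalizing. -/
theorem stmt_2 {S : Type*} (x : S) (g : FreeGroup S) (z : ℤ) (hz : z ≠ 0)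
    (h : g * FreeGroup.of x ^ z * g⁻¹ ∈ Subgroup.zpowers (FreeGroup.of x)) :
    g ∈ Subgroup.zpowers (FreeGroup.of x) := by
  classical
  exact Stmt2Aux.main x g.toWord.length g le_rfl z hz h
end

section
/- Let p and q be coprime positive integers and let G = ℤ/p * ℤ/q be the free product. If U ≤ G is a torsion-free subgroup of finite index, then the index [G : U] is divisible by pq; in particular [G : U] ≥ pq. -/
open Monoid
open scoped Monoid.Coprod

/-- A free action of a group on a finite type makes the group's cardinality
divide the type's cardinality. -/
lemma card_dvd_of_free_action {α β : Type*} [Group α] [MulAction α β] [Finite β]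
    (free : ∀ y : β, MulAction.stabilizer α y = ⊥) :
    Nat.card α ∣ Nat.card β := by
  classical
  have e : β ≃ (MulAction.orbitRel.Quotient α β) × α :=
    (MulAction.selfEquivSigmaOrbitsQuotientStabilizer α β).trans <|
      (Equiv.sigmaCongrRight fun ω =>
        ((free (Quotient.out ω)).symm ▸ (QuotientGroup.quotientBot (G := α)).toEquiv :
          α ⧸ MulAction.stabilizer α (Quotient.out ω) ≃ α)).trans
        (Equiv.sigmaEquivProd _ α)
  rw [Nat.card_congr e, Nat.card_prod]
  exact dvd_mul_left _ _

lemma conj_eq_one_aux {G : Type*} [Group G] {a g : G} (h : g⁻¹ * a⁻¹ * g = 1) : a = 1 := by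
  have h2 : a⁻¹ = 1 := by
    have := congrArg (fun x => g * x * g⁻¹) h
    simpa [mul_assoc] using this
  exact inv_eq_one.mp h2

lemma stab_free_of_torsionfree {M G : Type*} [Group M] [Group G] [Finite M]
    (f : M →* G) (hinj : Function.Injective f)
    (U : Subgroup G) [U.FiniteIndex]
    (htf : ∀ g ∈ U, g ≠ 1 → ¬ IsOfFinOrder g) :
    Nat.card M ∣ U.index := by
  letI : MulAction M (G ⧸ U) := MulAction.compHom _ f
  rw [Subgroup.index]
  refine card_dvd_of_free_action (fun y => ?_)
  refine QuotientGroup.induction_on y (fun g => ?_)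
  ext h
  simp only [MulAction.mem_stabilizer_iff, Subgroup.mem_bot]
  constructor
  · intro hh
    have hh' : QuotientGroup.mk (f h * g) = (QuotientGroup.mk g : G ⧸ U) := hh
    rw [QuotientGroup.eq] at hh'
    have hmem : g⁻¹ * (f h)⁻¹ * g ∈ U := by
      simpa [mul_assoc, mul_inv_rev] using hh'
    have hfo : IsOfFinOrder (g⁻¹ * (f h)⁻¹ * g) := by
      have h1 : IsOfFinOrder ((f h)⁻¹) := (f.isOfFinOrder (isOfFinOrder_of_finite h)).inv
      simpa [MulAut.conj_apply, mul_assoc] using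
        ((MulAut.conj g⁻¹).toMonoidHom.isOfFinOrder h1)
    have heq : g⁻¹ * (f h)⁻¹ * g = 1 := by
      by_contra hne
      exact htf _ hmem hne hfo
    exact hinj (by rw [conj_eq_one_aux heq, map_one])
  · rintro rfl
    show (f 1) • (QuotientGroup.mk g : G ⧸ U) = _
    simp

/-- A torsion-free finite-index subgroup of `ℤ/p * ℤ/q` (p, q coprime positive)
has index divisible by `pq`; in particular the index is at least `pq`. -/
theorem stmt_5 (p q : ℕ) (hp : 0 < p) (hq : 0 < q) (hcop : Nat.Coprime p q)
    (U : Subgroup (Multiplicative (ZMod p) ∗ Multiplicative (ZMod q)))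
    (hfin : U.FiniteIndex)
    (htf : ∀ g ∈ U, g ≠ 1 → ¬ IsOfFinOrder g) :
    p * q ∣ U.index ∧ p * q ≤ U.index := by
  haveI : NeZero p := ⟨hp.ne'⟩
  haveI : NeZero q := ⟨hq.ne'⟩
  have hdp : p ∣ U.index := by
    have := stab_free_of_torsionfree (Coprod.inl (M := Multiplicative (ZMod p))
      (N := Multiplicative (ZMod q))) Coprod.inl_injective U htf
    simpa [Nat.card_eq_fintype_card] using this
  have hdq : q ∣ U.index := by
    have := stab_free_of_torsionfree (Coprod.inr (M := Multiplicative (ZMod p))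
      (N := Multiplicative (ZMod q))) Coprod.inr_injective U htf
    simpa [Nat.card_eq_fintype_card] using this
  have hdvd : p * q ∣ U.index := Nat.Coprime.mul_dvd_of_dvd_of_dvd hcop hdp hdq
  exact ⟨hdvd, Nat.le_of_dvd (Nat.pos_of_ne_zero hfin.index_ne_zero) hdvd⟩
end

section
/- Let F_n be the free group on basis x₁, …, x_n with n ≥ 2, and let U ≤ F_n be a subgroup of finite index q generated by finitely many elements, each of which is conjugate in F_n to some basis element x_i. Then q = 1, i.e., U = F_n. Equivalently: a proper subgroup of F_n generated by conjugates of the basis elements has infinite index. -/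
namespace Stmt7Aux

variable {n : ℕ} (U : Subgroup (FreeGroup (Fin n)))

/-- The coset space. -/
abbrev Q (U : Subgroup (FreeGroup (Fin n))) := FreeGroup (Fin n) ⧸ U

open scoped Classical in
/-- Indicator that the generator `x_j` moves the coset `c`. -/
noncomputable def d (j : Fin n) (c : Q U) : ℤ :=
  if FreeGroup.of j • c = c then 0 else 1

lemma d_nonneg (j : Fin n) (c : Q U) : 0 ≤ d U j c := by
  unfold d; split <;> norm_num

lemma d_eq_zero {j : Fin n} {c : Q U} (h : FreeGroup.of j • c = c) : d U j c = 0 := by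
  simp [d, h]

lemma d_eq_one {j : Fin n} {c : Q U} (h : FreeGroup.of j • c ≠ c) : d U j c = 1 := by
  simp [d, h]

/-- The permutation of `Q × ℤ` attached to the generator `x_j`. -/
noncomputable def pj (j : Fin n) : Equiv.Perm (Q U × ℤ) where
  toFun p := (FreeGroup.of j • p.1, p.2 + d U j p.1)
  invFun p := ((FreeGroup.of j)⁻¹ • p.1, p.2 - d U j ((FreeGroup.of j)⁻¹ • p.1))
  left_inv p := by simp
  right_inv p := by simp

noncomputable def Φ : FreeGroup (Fin n) →* Equiv.Perm (Q U × ℤ) :=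
  FreeGroup.lift (fun j => pj U j)

lemma pure_eq (j : Fin n) : (pure j : FreeGroup (Fin n)) = FreeGroup.of j := rfl

lemma Φ_of (j : Fin n) : Φ U (FreeGroup.of j) = pj U j := FreeGroup.lift_apply_of

/-- The cocycle: signed number of non-loop edges traversed. -/
noncomputable def Fc (w : FreeGroup (Fin n)) (c : Q U) : ℤ := (Φ U w (c, 0)).2

lemma Fc_of (j : Fin n) (c : Q U) : Fc U (FreeGroup.of j) c = d U j c := by
  unfold Fc
  rw [Φ_of]
  show (0 : ℤ) + d U j c = d U j c
  rw [zero_add]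

lemma Fc_of_inv (j : Fin n) (c : Q U) :
    Fc U (FreeGroup.of j)⁻¹ c = - d U j ((FreeGroup.of j)⁻¹ • c) := by
  unfold Fc
  rw [map_inv, Φ_of]
  show (0 : ℤ) - d U j ((FreeGroup.of j)⁻¹ • c) = _
  ring

lemma key (w : FreeGroup (Fin n)) : ∀ (c : Q U) (m : ℤ),
    Φ U w (c, m) = (w • c, m + Fc U w c) := by
  induction w with
  | C1 =>
      intro c m
      rw [map_one]
      show (c, m) = ((1 : FreeGroup (Fin n)) • c, m + Fc U 1 c)
      rw [one_smul]
      have : Fc U 1 c = 0 := by unfold Fc; rw [map_one]; rfl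
      rw [this, add_zero]
  | of j =>
      intro c m
      rw [Φ_of, Fc_of]
      rfl
  | inv_of j _ =>
      intro c m
      rw [map_inv, Φ_of, Fc_of_inv]
      show ((FreeGroup.of j)⁻¹ • c, m - d U j ((FreeGroup.of j)⁻¹ • c)) = _
      rw [sub_eq_add_neg]
  | mul u v hu hv =>
      intro c m
      have e : ∀ m : ℤ, Φ U (u * v) (c, m) = (u • v • c, m + (Fc U v c + Fc U u (v • c))) := by
        intro m
        rw [map_mul, Equiv.Perm.mul_apply, hv, hu, add_assoc]
      have eF : Fc U (u * v) c = Fc U v c + Fc U u (v • c) := by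
        have h0 : Φ U (u * v) (c, 0) = (u • v • c, Fc U v c + Fc U u (v • c)) := by
          rw [e 0, zero_add]
        show (Φ U (u * v) (c, 0)).2 = _
        rw [h0]
      rw [e m, eF, mul_smul]

lemma Fc_mul (u v : FreeGroup (Fin n)) (c : Q U) :
    Fc U (u * v) c = Fc U u (v • c) + Fc U v c := by
  have h0 : Φ U (u * v) (c, 0) = (u • v • c, 0 + (Fc U v c + Fc U u (v • c))) := by
    rw [map_mul, Equiv.Perm.mul_apply, key U v c 0, key U u (v • c), add_assoc]
  show (Φ U (u * v) (c, 0)).2 = _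
  rw [h0]
  show 0 + (Fc U v c + Fc U u (v • c)) = _
  ring

lemma Fc_one (c : Q U) : Fc U 1 c = 0 := by
  show (Φ U 1 (c, 0)).2 = 0
  rw [map_one]
  rfl

lemma Fc_inv (w : FreeGroup (Fin n)) (c : Q U) : Fc U w⁻¹ (w • c) = - Fc U w c := by
  have h := Fc_mul U w⁻¹ w c
  rw [inv_mul_cancel, Fc_one] at h
  linarith

lemma Fc_conj (g v : FreeGroup (Fin n)) (b : Q U)
    (h : v • (g⁻¹ • b) = g⁻¹ • b) :
    Fc U (g * v * g⁻¹) b = Fc U v (g⁻¹ • b) := by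
  have h1 : Fc U (g * (v * g⁻¹)) b = Fc U g ((v * g⁻¹) • b) + Fc U (v * g⁻¹) b :=
    Fc_mul U g (v * g⁻¹) b
  have h2 : Fc U (v * g⁻¹) b = Fc U v (g⁻¹ • b) + Fc U g⁻¹ b := Fc_mul U v g⁻¹ b
  have h3 : Fc U g (g⁻¹ • b) = - Fc U g⁻¹ b := by
    have := Fc_inv U g⁻¹ b
    rw [inv_inv] at this
    linarith
  have h4 : (v * g⁻¹) • b = g⁻¹ • b := by rw [mul_smul, h]
  rw [mul_assoc, h1, h4, h2, h3]
  ring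

lemma Fc_pow_nonneg (j : Fin n) : ∀ (L : ℕ) (c : Q U), 0 ≤ Fc U (FreeGroup.of j ^ L) c := by
  intro L
  induction L with
  | zero => intro c; rw [pow_zero, Fc_one]
  | succ L ih =>
      intro c
      rw [pow_succ, Fc_mul, Fc_of]
      have h1 := ih (FreeGroup.of j • c)
      have h2 := d_nonneg U j c
      linarith

lemma Fc_pow_pos (j : Fin n) {L : ℕ} (hL : 1 ≤ L) {c : Q U}
    (hc : FreeGroup.of j • c ≠ c) : 1 ≤ Fc U (FreeGroup.of j ^ L) c := by
  obtain ⟨K, rfl⟩ := Nat.exists_eq_add_of_le hL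
  rw [add_comm, pow_succ, Fc_mul, Fc_of, d_eq_one U hc]
  have := Fc_pow_nonneg U j K (FreeGroup.of j • c)
  linarith

lemma smul_mk (g h : FreeGroup (Fin n)) :
    g • (QuotientGroup.mk h : Q U) = QuotientGroup.mk (g * h) := rfl

lemma mem_iff_fix (u : FreeGroup (Fin n)) :
    u ∈ U ↔ u • (QuotientGroup.mk 1 : Q U) = QuotientGroup.mk 1 := by
  rw [smul_mk, mul_one, QuotientGroup.eq, mul_one, inv_mem_iff]

end Stmt7Aux

open Stmt7Aux in
/-- A finite-index subgroup of `F_n` (n ≥ 2) generated by finitely many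
conjugates of basis elements is the whole group, i.e. has index 1. -/
theorem stmt_7 (n : ℕ) (hn : 2 ≤ n) (U : Subgroup (FreeGroup (Fin n)))
    (S : Finset (FreeGroup (Fin n)))
    (hS : ∀ s ∈ S, ∃ (i : Fin n) (g : FreeGroup (Fin n)),
      s = g * FreeGroup.of i * g⁻¹)
    (hU : U = Subgroup.closure (S : Set (FreeGroup (Fin n))))
    (hfin : U.FiniteIndex) :
    U.index = 1 ∧ U = ⊤ := by
  haveI := hfin
  have htop : U = ⊤ := by
    by_contra hne
    set b : Q U := QuotientGroup.mk 1 with hb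
    -- Step 1 : some generator moves some coset
    have hmoved : ∃ (j : Fin n) (c : Q U), FreeGroup.of j • c ≠ c := by
      by_contra hfix
      push_neg at hfix
      apply hne
      rw [Subgroup.eq_top_iff']
      intro w
      have hw : ∀ c : Q U, w • c = c := by
        induction w with
        | C1 => intro c; rw [one_smul]
        | of j => exact hfix j
        | inv_of j h => intro c; rw [inv_smul_eq_iff]; exact (h c).symm
        | mul u v hu hv => intro c; rw [mul_smul, hv, hu]
      exact (mem_iff_fix U w).mpr (hw _)
    obtain ⟨j, c, hc⟩ := hmoved
    -- Step 2 : Fc vanishes on U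
    have hfixmem : ∀ u ∈ U, u • b = b := fun u hu => (mem_iff_fix U u).mp hu
    have hvan : ∀ u ∈ U, Fc U u b = 0 := by
      intro u hu
      rw [hU] at hu
      induction hu using Subgroup.closure_induction with
      | mem s hs =>
          obtain ⟨i, g, rfl⟩ := hS s hs
          have hsU : g * FreeGroup.of i * g⁻¹ ∈ U := by
            rw [hU]; exact Subgroup.subset_closure hs
          have hfixs := hfixmem _ hsU
          have hfixi : FreeGroup.of i • (g⁻¹ • b) = g⁻¹ • b := by
            have h5 : g • FreeGroup.of i • g⁻¹ • b = b := by
              rw [← mul_smul, ← mul_smul]; exact hfixs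
            have h6 := congrArg (fun x => g⁻¹ • x) h5
            simp only [inv_smul_smul] at h6
            rw [h6]
          rw [Fc_conj U g (FreeGroup.of i) b hfixi, Fc_of, d_eq_zero U hfixi]
      | one => exact Fc_one U b
      | mul x y hx hy ihx ihy =>
          have hyU : y ∈ U := by rw [hU]; exact hy
          rw [Fc_mul, hfixmem y hyU, ihx, ihy, add_zero]
      | inv x hx ihx =>
          have hxU : x ∈ U := by rw [hU]; exact hx
          have h7 := Fc_inv U x b
          rw [hfixmem x hxU] at h7
          rw [h7, ihx, neg_zero]
    -- Step 3 : build an element of U with positive Fc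
    obtain ⟨w, rfl⟩ := QuotientGroup.mk_surjective c
    have hcb : (QuotientGroup.mk w : Q U) = w • b := by rw [hb, smul_mk, mul_one]
    haveI : Finite (Q U) := Subgroup.finite_quotient_of_finiteIndex (H := U)
    obtain ⟨a, a', hne', heq⟩ := Finite.exists_ne_map_eq_of_infinite
      (fun k : ℕ => (FreeGroup.of j) ^ k • (QuotientGroup.mk w : Q U))
    wlog hlt : a < a' generalizing a a'
    · exact this a' a hne'.symm heq.symm (by omega)
    have hL1 : 1 ≤ a' - a := by omega
    have hfixL : (FreeGroup.of j) ^ (a' - a) • (QuotientGroup.mk w : Q U)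
        = QuotientGroup.mk w := by
      have h1 : (FreeGroup.of j) ^ a • ((FreeGroup.of j) ^ (a' - a) •
          (QuotientGroup.mk w : Q U)) = (FreeGroup.of j) ^ a • (QuotientGroup.mk w : Q U) := by
        rw [smul_smul, ← pow_add]
        have ha : a + (a' - a) = a' := by omega
        rw [ha]
        exact heq.symm
      exact MulAction.injective _ h1
    have huU : w⁻¹ * FreeGroup.of j ^ (a' - a) * w ∈ U := by
      rw [mem_iff_fix]
      show (w⁻¹ * FreeGroup.of j ^ (a' - a) * w) • b = b
      rw [mul_smul, mul_smul, ← hcb, hfixL, smul_mk, inv_mul_cancel]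
    have hcond : (FreeGroup.of j ^ (a' - a)) • ((w⁻¹)⁻¹ • b) = (w⁻¹)⁻¹ • b := by
      rw [inv_inv, ← hcb, hfixL]
    have hval := Fc_conj U w⁻¹ (FreeGroup.of j ^ (a' - a)) b hcond
    rw [inv_inv] at hval
    have hpos : 1 ≤ Fc U (FreeGroup.of j ^ (a' - a)) (w • b) := by
      apply Fc_pow_pos U j hL1
      rw [← hcb]; exact hc
    have h0 := hvan _ huU
    rw [h0] at hval
    omega
  refine ⟨?_, htop⟩
  rw [htop]
  exact Subgroup.index_top
end

section
/- Let (A, v₀) be a finite rooted tree with canonical orientation, with vertex set partitioned as V₀ (vertices of positive valence 0, i.e., leaves), V₁ (positive valence 1), and V₂ (positive valence ≥ 2). Let n : VA → ℕ≥1 satisfy n(v) ≥ 2 for v ∈ V₁ and n(v) = 1 for v ∈ V₀ ∪ V₂, let b : V₀ → ℕ≥1 be arbitrary, and let h be the height function determined by n. Define B : VA → ℕ recursively by: B(v) = b(v) if v is a leaf; B(v) = n(v)·B(v₁) if v has exactly one child v₁; and B(v) = (∑ᵢ B(vᵢ)) − (d−1) if v has children v₁,…,v_d with d ≥ 2. Then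 B(v₀) = ∑_{v ∈ V₀} h(v)·b(v) − ∑_{v ∈ V₂} h(v)·(val₊(v) − 1), where val₊(v) denotes the number of children of v. -/
/-- Product of the weights `n` along the ancestor path of length `k` above `v`. -/
def heightAux {V : Type*} (parent : V → V) (n : V → ℕ) : ℕ → V → ℕ
  | 0, _ => 1
  | k + 1, v => heightAux parent n k (parent v) * n (parent v)

lemma heightAux_zero {V : Type*} (parent : V → V) (n : V → ℕ) (v : V) :
    heightAux parent n 0 v = 1 := rfl

lemma heightAux_succ {V : Type*} (parent : V → V) (n : V → ℕ) (k : ℕ) (v : V) :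
    heightAux parent n (k + 1) v = heightAux parent n k (parent v) * n (parent v) := rfl

lemma heightAux_one {V : Type*} (parent : V → V) (n : V → ℕ) (v : V) :
    heightAux parent n 1 v = n (parent v) := by
  rw [show (1 : ℕ) = 0 + 1 from rfl, heightAux_succ, heightAux_zero, one_mul]

lemma heightAux_add {V : Type*} (parent : V → V) (n : V → ℕ) (m k : ℕ) (w : V) :
    heightAux parent n (m + k) w
      = heightAux parent n m (parent^[k] w) * heightAux parent n k w := by
  induction k generalizing w with
  | zero => simp [heightAux_zero]
  | succ k ih =>
    rw [show m + (k + 1) = (m + k) + 1 by ring, heightAux_succ, ih (parent w),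
      heightAux_succ, Function.iterate_succ_apply]
    ring

/-- Closed formula for the bridge number of the knot associated to a labeled
rooted tree: if `B` satisfies Schubert's recursions
(`B(v) = b(v)` at leaves, `B(v) = n(v)·B(child)` at valence-one vertices,
`B(v) = ∑ B(child) − (d−1)` at vertices with `d ≥ 2` children), then
`B(v₀) = ∑_{v ∈ V₀} h(v)·b(v) − ∑_{v ∈ V₂} h(v)·(val₊(v) − 1)`. -/
theorem stmt_14 {V : Type*} [Fintype V] [DecidableEq V]
    (v₀ : V) (parent : V → V) (depth : V → ℕ)
    (hroot : depth v₀ = 0)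
    (hdepth : ∀ v : V, v ≠ v₀ → depth v = depth (parent v) + 1)
    (children : V → Finset V)
    (hchildren : ∀ v : V, children v
      = Finset.univ.filter (fun w => parent w = v ∧ w ≠ v₀))
    (n : V → ℕ)
    (hn1 : ∀ v : V, (children v).card = 1 → 2 ≤ n v)
    (hn2 : ∀ v : V, (children v).card ≠ 1 → n v = 1)
    (b : V → ℕ) (hb : ∀ v : V, (children v).card = 0 → 1 ≤ b v)
    (h : V → ℕ) (hh : ∀ v : V, h v = heightAux parent n (depth v) v)
    (B : V → ℕ)
    (hB0 : ∀ v : V, (children v).card = 0 → B v = b v)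
    (hB1 : ∀ v : V, (children v).card = 1 → ∀ w ∈ children v, B v = n v * B w)
    (hB2 : ∀ v : V, 2 ≤ (children v).card →
      B v = (∑ w ∈ children v, B w) - ((children v).card - 1)) :
    B v₀ = (∑ v ∈ Finset.univ.filter (fun v : V => (children v).card = 0),
              h v * b v)
         - (∑ v ∈ Finset.univ.filter (fun v : V => 2 ≤ (children v).card),
              h v * ((children v).card - 1)) := by
  classical
  have depth_pos : ∀ v : V, v ≠ v₀ → 1 ≤ depth v := by
    intro v hv; rw [hdepth v hv]; omega
  have depth_zero : ∀ v : V, depth v = 0 → v = v₀ := by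
    intro v hv; by_contra h'; have := depth_pos v h'; omega
  have mem_children : ∀ u v : V, u ∈ children v ↔ parent u = v ∧ u ≠ v₀ := by
    intro u v; rw [hchildren]; simp
  have child_depth : ∀ u v : V, u ∈ children v → depth u = depth v + 1 := by
    intro u v hu
    rw [mem_children] at hu
    rw [hdepth u hu.2, hu.1]
  set Sub : V → Finset V := fun v =>
    Finset.univ.filter
      (fun w => depth v ≤ depth w ∧ parent^[depth w - depth v] w = v) with hSubdef
  have mem_Sub : ∀ v w : V,
      w ∈ Sub v ↔ depth v ≤ depth w ∧ parent^[depth w - depth v] w = v := by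
    intro v w; simp [hSubdef]
  have mem_Sub_self : ∀ v, v ∈ Sub v := by
    intro v; rw [mem_Sub]; simp
  have depth_iter : ∀ (i : ℕ) (w : V), depth w ≤ depth (parent^[i] w) + i := by
    intro i
    induction i with
    | zero => simp
    | succ i ih =>
      intro w
      have h1 := ih w
      rw [Function.iterate_succ_apply']
      by_cases hu : parent^[i] w = v₀
      · rw [hu] at h1; rw [hroot] at h1; omega
      · have := hdepth _ hu; omega
  have Sub_step : ∀ v w u : V, u ∈ children v → w ∈ Sub u → w ∈ Sub v := by
    intro v w u hu hw
    rw [mem_Sub] at hw ⊢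
    have hdu := child_depth u v hu
    rw [mem_children] at hu
    refine ⟨by omega, ?_⟩
    rw [show depth w - depth v = (depth w - depth u) + 1 by omega,
      Function.iterate_succ_apply', hw.2, hu.1]
  have Sub_iff : ∀ v w : V, w ∈ Sub v ↔ w = v ∨ ∃ u ∈ children v, w ∈ Sub u := by
    intro v w
    constructor
    · intro hw
      rw [mem_Sub] at hw
      by_cases hwv : w = v
      · exact Or.inl hwv
      · right
        have hk : 1 ≤ depth w - depth v := by
          by_contra h'
          have h0 : depth w - depth v = 0 := by omega
          rw [h0] at hw
          exact hwv hw.2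
        have hpu : parent (parent^[depth w - depth v - 1] w) = v := by
          rw [← Function.iterate_succ_apply' parent (depth w - depth v - 1) w,
            show (depth w - depth v - 1).succ = depth w - depth v by omega]
          exact hw.2
        have hiter := depth_iter (depth w - depth v - 1) w
        have hdu_ge : depth v + 1 ≤ depth (parent^[depth w - depth v - 1] w) := by omega
        have hu0 : parent^[depth w - depth v - 1] w ≠ v₀ := by
          intro h'; rw [h', hroot] at hdu_ge; omega
        have hdu : depth (parent^[depth w - depth v - 1] w) = depth v + 1 := by
          rw [hdepth _ hu0, hpu]
        refine ⟨parent^[depth w - depth v - 1] w, ?_, ?_⟩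
        · rw [mem_children]; exact ⟨hpu, hu0⟩
        · rw [mem_Sub]
          refine ⟨by omega, ?_⟩
          rw [hdu, show depth w - (depth v + 1) = depth w - depth v - 1 by omega]
    · rintro (rfl | ⟨u, hu, hw⟩)
      · exact mem_Sub_self w
      · exact Sub_step _ _ _ hu hw
  have not_mem_bi : ∀ v : V, v ∉ (children v).biUnion Sub := by
    intro v hv
    rw [Finset.mem_biUnion] at hv
    obtain ⟨u, hu, hv'⟩ := hv
    rw [mem_Sub] at hv'
    have := child_depth u v hu
    omega
  have pdisj : ∀ v : V, (↑(children v) : Set V).PairwiseDisjoint Sub := by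
    intro v u₁ h₁ u₂ h₂ hne
    rw [Function.onFun, Finset.disjoint_left]
    intro w hw₁ hw₂
    rw [mem_Sub] at hw₁ hw₂
    apply hne
    have e₁ := child_depth u₁ v (by simpa using h₁)
    have e₂ := child_depth u₂ v (by simpa using h₂)
    rw [← hw₁.2, ← hw₂.2, show depth w - depth u₁ = depth w - depth u₂ by omega]
  have Sub_eq : ∀ v : V, Sub v = insert v ((children v).biUnion Sub) := by
    intro v; ext w
    rw [Sub_iff, Finset.mem_insert, Finset.mem_biUnion]
  have sum_split : ∀ (v : V) (f : V → ℕ),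
      ∑ w ∈ Sub v, f w = f v + ∑ u ∈ children v, ∑ w ∈ Sub u, f w := by
    intro v f
    rw [Sub_eq v, Finset.sum_insert (not_mem_bi v), Finset.sum_biUnion (pdisj v)]
  have Hstep : ∀ v u w : V, u ∈ children v → w ∈ Sub u →
      heightAux parent n (depth w - depth v) w
        = n v * heightAux parent n (depth w - depth u) w := by
    intro v u w hu hw
    have hdu := child_depth u v hu
    rw [mem_Sub] at hw
    rw [show depth w - depth v = 1 + (depth w - depth u) by omega,
      heightAux_add, hw.2, heightAux_one, ((mem_children u v).mp hu).1]
  set LF : V → V → ℕ := fun v w =>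
    heightAux parent n (depth w - depth v) w
      * (if (children w).card = 0 then b w else 0) with hLF
  set BR : V → V → ℕ := fun v w =>
    heightAux parent n (depth w - depth v) w
      * (if 2 ≤ (children w).card then (children w).card - 1 else 0) with hBR
  have hD : ∀ v : V, depth v ≤ Finset.univ.sup depth := fun v =>
    Finset.le_sup (Finset.mem_univ v)
  set D := Finset.univ.sup depth with hDdef
  have main : ∀ (k : ℕ) (v : V), D + 1 ≤ depth v + k →
      1 ≤ B v ∧ B v + ∑ w ∈ Sub v, BR v w = ∑ w ∈ Sub v, LF v w := by
    intro k
    induction k with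
    | zero => intro v hv; exact absurd hv (by have := hD v; omega)
    | succ k ih =>
      intro v hv
      have ihc : ∀ u ∈ children v,
          1 ≤ B u ∧ B u + ∑ w ∈ Sub u, BR u w = ∑ w ∈ Sub u, LF u w := by
        intro u hu
        exact ih u (by have := child_depth u v hu; omega)
      have hsplitBR := sum_split v (BR v)
      have hsplitLF := sum_split v (LF v)
      have hchildBR : ∀ u ∈ children v,
          ∑ w ∈ Sub u, BR v w = n v * ∑ w ∈ Sub u, BR u w := by
        intro u hu
        rw [Finset.mul_sum]
        refine Finset.sum_congr rfl fun w hw => ?_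
        simp only [hBR]
        rw [Hstep v u w hu hw, mul_assoc]
      have hchildLF : ∀ u ∈ children v,
          ∑ w ∈ Sub u, LF v w = n v * ∑ w ∈ Sub u, LF u w := by
        intro u hu
        rw [Finset.mul_sum]
        refine Finset.sum_congr rfl fun w hw => ?_
        simp only [hLF]
        rw [Hstep v u w hu hw, mul_assoc]
      have selfBR : BR v v
          = if 2 ≤ (children v).card then (children v).card - 1 else 0 := by
        simp [hBR, heightAux_zero]
      have selfLF : LF v v = if (children v).card = 0 then b v else 0 := by
        simp [hLF, heightAux_zero]
      by_cases h0 : (children v).card = 0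
      · have hce : children v = ∅ := Finset.card_eq_zero.mp h0
        have hBv := hB0 v h0
        refine ⟨by rw [hBv]; exact hb v h0, ?_⟩
        rw [hsplitBR, hsplitLF, hce]
        simp [selfBR, selfLF, h0, hBv]
      · by_cases h1 : (children v).card = 1
        · obtain ⟨u, hu⟩ := Finset.card_eq_one.mp h1
          have hu_mem : u ∈ children v := by rw [hu]; exact Finset.mem_singleton_self u
          have hBv := hB1 v h1 u hu_mem
          have ihu := ihc u hu_mem
          refine ⟨?_, ?_⟩
          · rw [hBv]
            have h2 := hn1 v h1
            exact Nat.one_le_iff_ne_zero.mpr (Nat.mul_ne_zero (by omega) (by omega))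
          · rw [hsplitBR, hsplitLF, hu, Finset.sum_singleton, Finset.sum_singleton,
              hchildBR u hu_mem, hchildLF u hu_mem, selfBR, selfLF,
              if_neg (by omega), if_neg (by omega), hBv, ← ihu.2]
            ring
        · have hc : 2 ≤ (children v).card := by omega
          have hn := hn2 v h1
          have hBv := hB2 v hc
          have hsumB : (children v).card ≤ ∑ u ∈ children v, B u := by
            calc (children v).card = ∑ _u ∈ children v, 1 := by simp
              _ ≤ ∑ u ∈ children v, B u :=
                  Finset.sum_le_sum fun u hu => (ihc u hu).1
          have hBv' : B v + ((children v).card - 1) = ∑ u ∈ children v, B u := by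
            rw [hBv]; omega
          have e1 : ∑ u ∈ children v, ∑ w ∈ Sub u, BR v w
              = ∑ u ∈ children v, ∑ w ∈ Sub u, BR u w := by
            refine Finset.sum_congr rfl fun u hu => ?_
            rw [hchildBR u hu, hn, one_mul]
          have e2 : ∑ u ∈ children v, ∑ w ∈ Sub u, LF v w
              = ∑ u ∈ children v, ∑ w ∈ Sub u, LF u w := by
            refine Finset.sum_congr rfl fun u hu => ?_
            rw [hchildLF u hu, hn, one_mul]
          have hsum2 : ∑ u ∈ children v, (B u + ∑ w ∈ Sub u, BR u w)
              = ∑ u ∈ children v, ∑ w ∈ Sub u, LF u w :=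
            Finset.sum_congr rfl fun u hu => (ihc u hu).2
          rw [Finset.sum_add_distrib] at hsum2
          constructor
          · omega
          · rw [hsplitBR, hsplitLF, e1, e2, selfBR, selfLF, if_pos hc, if_neg h0]
            omega
  have Sub_root : Sub v₀ = Finset.univ := by
    have iter_root : ∀ (k : ℕ) (w : V), depth w = k → parent^[k] w = v₀ := by
      intro k
      induction k with
      | zero => intro w hw; exact depth_zero w hw
      | succ k ih =>
        intro w hw
        have hw0 : w ≠ v₀ := by intro h'; rw [h', hroot] at hw; omega
        rw [Function.iterate_succ_apply]
        apply ih
        have := hdepth w hw0; omega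
    ext w
    simp only [Finset.mem_univ, iff_true]
    rw [mem_Sub, hroot]
    exact ⟨Nat.zero_le _, by rw [Nat.sub_zero]; exact iter_root (depth w) w rfl⟩
  obtain ⟨-, hmain⟩ := main (D + 1) v₀ (by omega)
  rw [Sub_root] at hmain
  have hLFsum : ∑ w ∈ Finset.univ, LF v₀ w
      = ∑ v ∈ Finset.univ.filter (fun v : V => (children v).card = 0), h v * b v := by
    rw [Finset.sum_filter]
    refine Finset.sum_congr rfl fun w _ => ?_
    simp only [hLF]
    rw [hroot, Nat.sub_zero, ← hh w, mul_ite, mul_zero]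
  have hBRsum : ∑ w ∈ Finset.univ, BR v₀ w
      = ∑ v ∈ Finset.univ.filter (fun v : V => 2 ≤ (children v).card),
          h v * ((children v).card - 1) := by
    rw [Finset.sum_filter]
    refine Finset.sum_congr rfl fun w _ => ?_
    simp only [hBR]
    rw [hroot, Nat.sub_zero, ← hh w, mul_ite, mul_zero]
  rw [← hLFsum, ← hBRsum]
  omega
end

section
/- Let G be the free product ℤ/p * ℤ/q with p, q coprime and 2 ≤ q < p, and let U ≤ G be a free subgroup of finite rank r that is of finite index in G. Then 1 − r ≤ −pq + p + q; in particular, if r < q then U cannot have finite index in G. -/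
open List

namespace FGTF

variable {α : Type*} [DecidableEq α]

def R : (α × Bool) → (α × Bool) → Prop := fun a b => ¬(a.1 = b.1 ∧ a.2 = !b.2)

theorem reduce_eq_self_of_chain' {L : List (α × Bool)} (h : List.Chain' (R) L) :
    FreeGroup.reduce L = L := by
  induction L with
  | nil => rfl
  | cons x L ih =>
    have hL : FreeGroup.reduce L = L := ih h.tail
    rw [FreeGroup.reduce.cons, hL]
    cases L with
    | nil => rfl
    | cons hd tl =>
      have hx : R x hd := (List.isChain_cons_cons.mp h).1
      simp only [R] at hx
      simp [if_neg hx]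

theorem chain'_reduce (L : List (α × Bool)) : List.Chain' (R (α := α)) (FreeGroup.reduce L) := by
  induction L with
  | nil => exact List.isChain_nil
  | cons x L ih =>
    rw [FreeGroup.reduce.cons]
    rcases h : FreeGroup.reduce L with _ | ⟨hd, tl⟩
    · exact List.isChain_singleton _
    · rw [h] at ih
      by_cases hc : x.1 = hd.1 ∧ x.2 = !hd.2
      · simpa [if_pos hc] using (show List.Chain' R tl from ih.tail)
      · simp only [if_neg hc]
        exact List.isChain_cons_cons.mpr ⟨hc, ih⟩

theorem chain'_toWord (w : FreeGroup α) : List.Chain' (R) w.toWord := by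
  have := chain'_reduce (α := α) w.toWord
  rwa [FreeGroup.reduce_toWord] at this

theorem cyc_pow_toWord (w : FreeGroup α) (x : α × Bool) (T : List (α × Bool))
    (hL : w.toWord = x :: T) (z : α × Bool) (hz : z ∈ (x :: T).getLast?) (hc : R z x) :
    ∀ m : ℕ, (w ^ m).toWord = ((List.replicate m (x :: T)).flatten) := by
  have hLw : w = FreeGroup.mk (x :: T) := by rw [← hL, FreeGroup.mk_toWord]
  have hch : List.Chain' R (x :: T) := by rw [← hL]; exact chain'_toWord w
  intro m
  induction m with
  | zero => simp
  | succ m ihm =>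
    have hmk : w ^ (m + 1) =
        FreeGroup.mk ((x :: T) ++ (List.replicate m (x :: T)).flatten) := by
      rw [← FreeGroup.mul_mk, ← ihm, FreeGroup.mk_toWord, pow_succ', ← hLw]
    rw [List.replicate_succ, List.flatten_cons, hmk, FreeGroup.toWord_mk,
      reduce_eq_self_of_chain']
    refine List.IsChain.append hch ?_ ?_
    · rw [← ihm]; exact chain'_toWord _
    · intro a ha b hb
      have ha' : a = z := by
        rw [List.getLast?_eq_getLast_of_ne_nil (List.cons_ne_nil _ _)] at ha hz
        rw [Option.mem_def, Option.some_inj] at ha hz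
        rw [← ha, ← hz]
      cases m with
      | zero => simp at hb
      | succ m =>
        have hb' : b = x := by
          rw [List.replicate_succ, List.flatten_cons, List.cons_append] at hb
          simp only [List.head?_cons, Option.mem_def, Option.some_inj] at hb
          exact hb.symm
        rw [ha', hb']
        exact hc

theorem torsionfree (n : ℕ) (hn : n ≠ 0) : ∀ w : FreeGroup α, w ^ n = 1 → w = 1 := by
  suffices H : ∀ k, ∀ w : FreeGroup α, w.toWord.length = k → w ^ n = 1 → w = 1 by
    intro w hw; exact H _ w rfl hw
  intro k
  induction k using Nat.strong_induction_on with
  | _ k ih =>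
  intro w hk hwn
  rcases hL : w.toWord with _ | ⟨x, T⟩
  · rwa [← FreeGroup.toWord_eq_nil_iff]
  have hcyccase : ∀ z : α × Bool, z ∈ (x :: T).getLast? → R z x → w = 1 := by
    intro z hz hc
    exfalso
    have h1 : (w ^ n).toWord = [] := by rw [hwn, FreeGroup.toWord_one]
    rw [cyc_pow_toWord w x T hL z hz hc n] at h1
    rcases Nat.exists_eq_succ_of_ne_zero hn with ⟨m, rfl⟩
    rw [List.replicate_succ, List.flatten_cons] at h1
    simp at h1
  rcases List.eq_nil_or_concat T with rfl | ⟨M, z, hT⟩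
  · refine hcyccase x (by simp) ?_
    simp [R]
  rw [List.concat_eq_append] at hT
  subst hT
  by_cases hc : z.1 = x.1 ∧ z.2 = !x.2
  · -- not cyclically reduced: conjugate to shorter word
    have hLw : w = FreeGroup.mk (x :: (M ++ [z])) := by rw [← hL, FreeGroup.mk_toWord]
    have hch : List.Chain' R (x :: (M ++ [z])) := by rw [← hL]; exact chain'_toWord w
    have hzx : z = (x.1, !x.2) := by
      rcases z with ⟨z1, z2⟩; rcases hc with ⟨h1, h2⟩
      simp_all
    set c : FreeGroup α := FreeGroup.mk [x] with hcdef
    have hcinv : c⁻¹ = FreeGroup.mk [(x.1, !x.2)] := by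
      rw [hcdef, FreeGroup.inv_mk]
      simp [FreeGroup.invRev]
    set v : FreeGroup α := c⁻¹ * w * c with hvdef
    have hvM : v.toWord = M := by
      have h1 : v = FreeGroup.mk ([(x.1, !x.2)] ++ (x :: (M ++ [z])) ++ [x]) := by
        rw [hvdef, hcinv, hLw, hcdef, FreeGroup.mul_mk, FreeGroup.mul_mk]
      have hred : FreeGroup.Red ([(x.1, !x.2)] ++ (x :: (M ++ [z])) ++ [x]) M := by
        have e1 : ([(x.1, !x.2)] ++ (x :: (M ++ [z])) ++ [x])
            = [] ++ (x.1, !x.2) :: (x.1, !(!x.2)) :: (M ++ [z, x]) := by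
          simp [Bool.not_not]
        have step1 : FreeGroup.Red.Step ([(x.1, !x.2)] ++ (x :: (M ++ [z])) ++ [x])
            (M ++ [z, x]) := by
          rw [e1]
          exact FreeGroup.Red.Step.not
        have e2 : (M ++ [z, x]) = M ++ (x.1, !x.2) :: (x.1, !(!x.2)) :: [] := by
          simp [hzx, Bool.not_not]
        have step2 : FreeGroup.Red.Step (M ++ [z, x]) (M ++ []) := by
          rw [e2]; exact FreeGroup.Red.Step.not
        rw [List.append_nil] at step2
        exact Relation.ReflTransGen.trans step1.to_red step2.to_red
      have hMch : List.Chain' R M := by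
        have := hch.tail
        exact this.prefix ⟨[z], rfl⟩
      rw [h1, FreeGroup.toWord_mk, FreeGroup.reduce.eq_of_red hred,
        reduce_eq_self_of_chain' hMch]
    have hlen : M.length < k := by
      rw [← hk, hL]
      simp only [List.length_cons, List.length_append, List.length_singleton]
      omega
    have hvn : v ^ n = 1 := by
      have hconj : v = (MulAut.conj c⁻¹) w := by
        rw [hvdef]; simp [MulAut.conj]
      rw [hconj, ← map_pow, hwn, map_one]
    have hv1 : v = 1 := ih _ hlen v (by rw [hvM]) hvn
    rw [hvdef] at hv1
    have hw : w = c * (c⁻¹ * w * c) * c⁻¹ := by group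
    rw [hw, hv1]
    group
  · refine hcyccase z ?_ ?_
    · rw [← List.cons_append, List.getLast?_concat]
      rfl
    · exact hc

end FGTF

open Finset

namespace S15

variable {G : Type*} [Group G] {X : Type*} [MulAction G X]

/-- The permutation action of `G` on functions `X → ℚ`, as linear maps. -/
def rho (g : G) : (X → ℚ) →ₗ[ℚ] (X → ℚ) where
  toFun f := fun x => f (g⁻¹ • x)
  map_add' := fun _ _ => rfl
  map_smul' := fun _ _ => rfl

@[simp] lemma rho_apply (g : G) (f : X → ℚ) (x : X) : rho g f x = f (g⁻¹ • x) := rfl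

lemma rho_one : rho (G := G) (X := X) 1 = LinearMap.id := by
  ext f x; simp

lemma rho_rho (g h : G) (f : X → ℚ) : rho g (rho h f) = rho (g * h) f := by
  funext x; simp [mul_smul]

/-- Cocycle (derivation) condition. -/
def IsCocycle (d : G → (X → ℚ)) : Prop := ∀ g h, d (g * h) = d g + rho g (d h)

lemma IsCocycle.map_one {d : G → (X → ℚ)} (hd : IsCocycle d) : d 1 = 0 := by
  have h := hd 1 1
  rw [mul_one, rho_one] at h
  simpa using h.symm

lemma IsCocycle.map_inv {d : G → (X → ℚ)} (hd : IsCocycle d) (g : G) :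
    d g⁻¹ = - rho g⁻¹ (d g) := by
  have h := hd g⁻¹ g
  rw [inv_mul_cancel, hd.map_one] at h
  have : d g⁻¹ = -rho g⁻¹ (d g) := by
    rw [eq_neg_iff_add_eq_zero]
    exact h.symm
  exact this

lemma IsCocycle.add {d d' : G → (X → ℚ)} (hd : IsCocycle d) (hd' : IsCocycle d') :
    IsCocycle (d + d') := by
  intro g h
  simp only [Pi.add_apply, hd g h, hd' g h, map_add]
  abel

lemma IsCocycle.smul {d : G → (X → ℚ)} (hd : IsCocycle d) (c : ℚ) :
    IsCocycle (c • d) := by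
  intro g h
  simp only [Pi.smul_apply, hd g h, smul_add, map_smul]

/-- Averaging ("norm") operator of a finite-order element. -/
def NN (w : G) (e : ℕ) : (X → ℚ) →ₗ[ℚ] (X → ℚ) := ∑ j ∈ Finset.range e, rho (w ^ j)

lemma NN_apply (w : G) (e : ℕ) (f : X → ℚ) :
    NN w e f = ∑ j ∈ Finset.range e, rho (w ^ j) f := by
  simp [NN]

lemma telescope {w : G} {e : ℕ} (hw : w ^ e = 1) (f : X → ℚ) :
    ∑ j ∈ Finset.range e, rho (w ^ (j + 1)) f = ∑ j ∈ Finset.range e, rho (w ^ j) f := by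
  have h := Finset.sum_range_sub (fun j => rho (w ^ j) f) e
  rw [hw, pow_zero, rho_one] at h
  simp only [LinearMap.id_coe, id_eq, sub_self] at h
  rw [Finset.sum_sub_distrib] at h
  have := sub_eq_zero.mp h
  exact this

lemma rho_NN {w : G} {e : ℕ} (hw : w ^ e = 1) (f : X → ℚ) :
    rho w (NN w e f) = NN w e f := by
  rw [NN_apply, map_sum]
  calc ∑ j ∈ Finset.range e, rho w (rho (w ^ j) f)
      = ∑ j ∈ Finset.range e, rho (w ^ (j + 1)) f := by
        refine Finset.sum_congr rfl fun j _ => ?_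
        rw [rho_rho, ← pow_succ']
    _ = ∑ j ∈ Finset.range e, rho (w ^ j) f := telescope hw f

lemma NN_coboundary {w : G} {e : ℕ} (hw : w ^ e = 1) (f : X → ℚ) :
    NN w e (rho w f - f) = 0 := by
  rw [map_sub, NN_apply, NN_apply]
  have : ∑ j ∈ Finset.range e, rho (w ^ j) (rho w f)
      = ∑ j ∈ Finset.range e, rho (w ^ (j + 1)) f := by
    refine Finset.sum_congr rfl fun j _ => ?_
    rw [rho_rho, ← pow_succ]
  rw [this, telescope hw f, sub_self]

lemma rho_pow_of_invariant {w : G} {f : X → ℚ} (hf : rho w f = f) (j : ℕ) :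
    rho (w ^ j) f = f := by
  induction j with
  | zero => rw [pow_zero, rho_one]; rfl
  | succ j ih => rw [pow_succ, ← rho_rho, hf, ih]

lemma NN_of_invariant {w : G} {e : ℕ} {f : X → ℚ} (hf : rho w f = f) :
    NN w e f = (e : ℚ) • f := by
  rw [NN_apply]
  rw [Finset.sum_congr rfl fun j _ => rho_pow_of_invariant hf j]
  simp [Finset.sum_const, ← Nat.cast_smul_eq_nsmul ℚ]

lemma mem_range_NN_of_invariant {w : G} {e : ℕ} (he : e ≠ 0) {f : X → ℚ}
    (hf : rho w f = f) : f ∈ LinearMap.range (NN w e (X := X)) := by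
  refine ⟨((e : ℚ))⁻¹ • f, ?_⟩
  rw [map_smul, NN_of_invariant hf, smul_smul, inv_mul_cancel₀ (by exact_mod_cast he), one_smul]

end S15

namespace S15

variable {G : Type*} [Group G] {X : Type*} [MulAction G X]

lemma orbit_op [Fintype X] (w : G) (e : ℕ) (he : e ≠ 0) (hw : w ^ e = 1)
    (hfree : ∀ k : ℕ, 0 < k → k < e → ∀ x : X, w ^ k • x ≠ x) :
    ∃ nO : ℕ, Fintype.card X = nO * e ∧
      Module.finrank ℚ (LinearMap.range (NN (X := X) w e)) = nO := by
  classical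
  haveI : NeZero e := ⟨he⟩
  have hepos : 0 < e := Nat.pos_of_ne_zero he
  have powmod : ∀ l : ℕ, w ^ l = w ^ (l % e) := fun l => by
    conv_lhs => rw [← Nat.div_add_mod l e]
    rw [pow_add, pow_mul, hw, one_pow, one_mul]
  let S : Setoid X :=
    ⟨fun x y => ∃ k : ℕ, w ^ k • x = y,
      fun x => ⟨0, by simp⟩,
      by
        rintro x y ⟨k, rfl⟩
        refine ⟨e - k % e, ?_⟩
        rw [powmod k, ← mul_smul, ← pow_add,
          Nat.sub_add_cancel (le_of_lt (Nat.mod_lt _ hepos)), hw, one_smul],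
      by
        rintro x y z ⟨k, rfl⟩ ⟨l, rfl⟩
        exact ⟨l + k, by rw [pow_add, mul_smul]⟩⟩
  have hkey : ∀ (z : X) (i j : ℕ), i ≤ j → j < e → w ^ j • z = w ^ i • z → j = i := by
    intro z i j hij hje hzz
    by_contra hne
    have hd : 0 < j - i := by omega
    have : w ^ (j - i) • (w ^ i • z) = w ^ i • z := by
      rw [← mul_smul, ← pow_add, Nat.sub_add_cancel hij, hzz]
    exact hfree (j - i) hd (by omega) _ this
  -- the fibers of the quotient map
  have fibeq : ∀ ω : Quotient S, Nonempty (ZMod e ≃ {x : X // Quotient.mk S x = ω}) := by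
    intro ω
    let F : ZMod e → {x : X // Quotient.mk S x = ω} := fun k =>
      ⟨w ^ k.val • ω.out, by
        conv_rhs => rw [← Quotient.out_eq ω]
        exact Quotient.sound (S.iseqv.symm ⟨k.val, rfl⟩)⟩
    refine ⟨Equiv.ofBijective F ⟨?_, ?_⟩⟩
    · intro k₁ k₂ hk
      have h : w ^ k₁.val • ω.out = w ^ k₂.val • ω.out := congrArg Subtype.val hk
      have hv : k₁.val = k₂.val := by
        rcases le_total k₁.val k₂.val with hle | hle
        · exact (hkey ω.out k₁.val k₂.val hle (ZMod.val_lt k₂) h.symm).symm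
        · exact hkey ω.out k₂.val k₁.val hle (ZMod.val_lt k₁) h
      exact ZMod.val_injective e hv
    · rintro ⟨x, hx⟩
      have : Quotient.mk S ω.out = Quotient.mk S x := by rw [Quotient.out_eq, hx]
      obtain ⟨l, hl⟩ := Quotient.exact this
      refine ⟨(l : ZMod e), ?_⟩
      apply Subtype.ext
      show w ^ ((l : ZMod e)).val • ω.out = x
      rw [ZMod.val_natCast, ← powmod l, hl]
  -- cardinality
  have hcard : Fintype.card X = Fintype.card (Quotient S) * e := by
    rw [← Fintype.card_congr (Equiv.sigmaFiberEquiv (Quotient.mk S))]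
    rw [Fintype.card_sigma]
    have : ∀ ω : Quotient S, Fintype.card {x : X // Quotient.mk S x = ω} = e := by
      intro ω
      rw [← Fintype.card_congr (fibeq ω).some]
      exact ZMod.card e
    rw [Finset.sum_congr rfl fun ω _ => this ω]
    simp [mul_comm]
  -- the linear map from functions on the quotient
  let ι : ((Quotient S) → ℚ) →ₗ[ℚ] (X → ℚ) :=
    { toFun := fun g => fun x => g (Quotient.mk S x)
      map_add' := fun _ _ => rfl
      map_smul' := fun _ _ => rfl }
  have hιinj : Function.Injective ι := by
    intro g g' hgg
    funext ω
    have := congrFun hgg ω.out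
    simpa [ι, Quotient.out_eq] using this
  have hrange : LinearMap.range ι = LinearMap.range (NN (X := X) w e) := by
    apply _root_.le_antisymm
    · rintro f ⟨g, rfl⟩
      apply mem_range_NN_of_invariant he
      funext x
      show g (Quotient.mk S (w⁻¹ • x)) = g (Quotient.mk S x)
      refine congrArg g (Quotient.sound ⟨1, ?_⟩)
      simp
    · rintro f ⟨m, rfl⟩
      refine ⟨fun ω => NN w e m ω.out, ?_⟩
      funext x
      show NN w e m (Quotient.mk S x).out = NN w e m x
      obtain ⟨k, hk⟩ := Quotient.exact (Quotient.out_eq (Quotient.mk S x))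
      have hinv : ∀ y : X, NN w e m ((w ^ k)⁻¹ • y) = NN w e m y := by
        intro y
        have h2 := congrFun (rho_pow_of_invariant (rho_NN hw m) k) y
        simpa using h2
      have h4 := hinv x
      have h3 : (w ^ k)⁻¹ • x = (Quotient.mk S x).out := by
        conv_lhs => rw [← hk]
        rw [inv_smul_smul]
      rw [h3] at h4
      exact h4
  refine ⟨Fintype.card (Quotient S), hcard, ?_⟩
  rw [← hrange, LinearMap.finrank_range_of_inj hιinj, Module.finrank_pi]

end S15

namespace S15

open Monoid
open scoped Monoid.Coprod

section CoprodPart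

variable (p q : ℕ)

/-- The free product of two finite cyclic groups. -/
abbrev GG := Multiplicative (ZMod p) ∗ Multiplicative (ZMod q)

/-- Generator of the left factor. -/
def agen : GG p q := Coprod.inl (Multiplicative.ofAdd (1 : ZMod p))

/-- Generator of the right factor. -/
def bgen : GG p q := Coprod.inr (Multiplicative.ofAdd (1 : ZMod q))

lemma mult_pow_card (x : Multiplicative (ZMod p)) : x ^ p = 1 := by
  have : x = Multiplicative.ofAdd x.toAdd := rfl
  rw [this, ← ofAdd_nsmul]
  have : p • x.toAdd = 0 := by
    rw [nsmul_eq_mul, ZMod.natCast_self, zero_mul]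
  rw [this]
  rfl

lemma ofAdd_natCast (k : ℕ) :
    (Multiplicative.ofAdd ((1 : ZMod p))) ^ k = Multiplicative.ofAdd ((k : ZMod p)) := by
  rw [← ofAdd_nsmul, nsmul_eq_mul, mul_one]

lemma agen_pow_p : (agen p q) ^ p = 1 := by
  rw [agen, ← map_pow, mult_pow_card, map_one]

lemma bgen_pow_q : (bgen p q) ^ q = 1 := by
  rw [bgen, ← map_pow, mult_pow_card, map_one]

lemma inl_eq_pow [NeZero p] (x : Multiplicative (ZMod p)) :
    Coprod.inl x = (agen p q) ^ (x.toAdd.val) := by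
  rw [agen, ← map_pow, ofAdd_natCast, ZMod.natCast_zmod_val]
  rfl

lemma inr_eq_pow [NeZero q] (y : Multiplicative (ZMod q)) :
    (Coprod.inr y : GG p q) = (bgen p q) ^ (y.toAdd.val) := by
  rw [bgen, ← map_pow, ofAdd_natCast, ZMod.natCast_zmod_val]
  rfl

lemma closure_gens [NeZero p] [NeZero q] :
    Subgroup.closure {agen p q, bgen p q} = ⊤ := by
  rw [eq_top_iff]
  intro g _
  induction g using Coprod.induction_on with
  | inl x =>
      rw [inl_eq_pow]
      exact pow_mem (Subgroup.subset_closure (by simp)) _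
  | inr y =>
      rw [inr_eq_pow]
      exact pow_mem (Subgroup.subset_closure (by simp)) _
  | mul x y hx hy => exact mul_mem (hx trivial) (hy trivial)

variable {X : Type*} [MulAction (GG p q) X]

lemma cocycle_ext [NeZero p] [NeZero q] {d d' : GG p q → X → ℚ}
    (hd : IsCocycle d) (hd' : IsCocycle d')
    (ha : d (agen p q) = d' (agen p q)) (hb : d (bgen p q) = d' (bgen p q)) : d = d' := by
  let Sg : Subgroup (GG p q) :=
    { carrier := {g | d g = d' g}
      one_mem' := by
        show d 1 = d' 1
        rw [hd.map_one, hd'.map_one]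
      mul_mem' := by
        intro a b haa hbb
        show d (a * b) = d' (a * b)
        rw [hd a b, hd' a b, haa, hbb]
      inv_mem' := by
        intro a haa
        show d a⁻¹ = d' a⁻¹
        rw [hd.map_inv, hd'.map_inv, haa] }
  have htop : (⊤ : Subgroup (GG p q)) ≤ Sg := by
    rw [← closure_gens p q]
    refine (Subgroup.closure_le Sg).mpr ?_
    rintro g (rfl | rfl)
    · exact ha
    · exact hb
  funext g
  exact htop (Subgroup.mem_top g)

/-- `G`-action on `Multiplicative (X → ℚ)` by automorphisms. -/
def phi {G : Type*} [Group G] [MulAction G X] : G →* MulAut (Multiplicative (X → ℚ)) where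
  toFun g :=
    { toFun := fun f => Multiplicative.ofAdd (rho g f.toAdd)
      invFun := fun f => Multiplicative.ofAdd (rho g⁻¹ f.toAdd)
      left_inv := fun f => by
        simp only [toAdd_ofAdd, rho_rho, inv_mul_cancel, rho_one, LinearMap.id_coe, id_eq]
        rfl
      right_inv := fun f => by
        simp only [toAdd_ofAdd, rho_rho, mul_inv_cancel, rho_one, LinearMap.id_coe, id_eq]
        rfl
      map_mul' := fun f₁ f₂ => by
        show Multiplicative.ofAdd (rho g (f₁.toAdd + f₂.toAdd)) = _
        rw [map_add]
        rfl }
  map_one' := by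
    apply MulEquiv.ext; intro f
    show Multiplicative.ofAdd (rho (1 : G) f.toAdd) = f
    rw [rho_one]
    rfl
  map_mul' := fun g h => by
    apply MulEquiv.ext; intro f
    show Multiplicative.ofAdd (rho (g * h) f.toAdd) = _
    rw [← rho_rho]
    rfl

lemma phi_apply {G : Type*} [Group G] [MulAction G X] (g : G) (m : X → ℚ) :
    phi (X := X) g (Multiplicative.ofAdd m) = Multiplicative.ofAdd (rho g m) := rfl

end CoprodPart

end S15

namespace S15

open Monoid SemidirectProduct
open scoped Monoid.Coprod

section Der

variable (p q : ℕ) {X : Type*} [MulAction (GG p q) X]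

/-- Existence of a derivation with prescribed values on the generators. -/
lemma exists_der [NeZero p] [NeZero q] (ma mb : X → ℚ)
    (hma : NN (agen p q) p ma = 0) (hmb : NN (bgen p q) q mb = 0) :
    ∃ d : GG p q → X → ℚ, IsCocycle d ∧ d (agen p q) = ma ∧ d (bgen p q) = mb := by
  set G := GG p q
  set H := SemidirectProduct (Multiplicative (X → ℚ)) G (phi (X := X)) with hH
  -- the two basic elements
  have mkpow : ∀ (w : G) (m : X → ℚ) (k : ℕ),
      (⟨Multiplicative.ofAdd m, w⟩ : H) ^ k
        = ⟨Multiplicative.ofAdd (∑ j ∈ Finset.range k, rho (w ^ j) m), w ^ k⟩ := by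
    intro w m k
    induction k with
    | zero =>
        apply SemidirectProduct.ext
        · show (1 : Multiplicative (X → ℚ)) = Multiplicative.ofAdd (∑ j ∈ Finset.range 0, rho (w ^ j) m)
          simp
        · show (1 : G) = w ^ 0
          simp
    | succ k ihk =>
        rw [pow_succ, ihk]
        apply SemidirectProduct.ext
        · show Multiplicative.ofAdd (∑ j ∈ Finset.range k, rho (w ^ j) m)
              * phi (w ^ k) (Multiplicative.ofAdd m)
              = Multiplicative.ofAdd (∑ j ∈ Finset.range (k + 1), rho (w ^ j) m)
          rw [phi_apply, Finset.sum_range_succ]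
          rfl
        · show w ^ k * w = w ^ (k + 1)
          rw [pow_succ]
  have hgenpow : ∀ (w : G) (m : X → ℚ) (e : ℕ), w ^ e = 1 → NN w e m = 0 →
      (⟨Multiplicative.ofAdd m, w⟩ : H) ^ e = 1 := by
    intro w m e hw hm
    rw [mkpow, ← NN_apply, hm, hw]
    rfl
  have hha : (⟨Multiplicative.ofAdd ma, agen p q⟩ : H) ^ p = 1 :=
    hgenpow _ _ _ (agen_pow_p p q) hma
  have hhb : (⟨Multiplicative.ofAdd mb, bgen p q⟩ : H) ^ q = 1 :=
    hgenpow _ _ _ (bgen_pow_q p q) hmb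
  -- building homs from the cyclic factors
  have mkσ : ∀ (e : ℕ) [NeZero e] (h : H), h ^ e = 1 →
      ∃ σ : Multiplicative (ZMod e) →* H,
        (∀ x, ∃ c : ℤ, σ x = h ^ c ∧ x = Multiplicative.ofAdd ((c : ZMod e))) ∧
        σ (Multiplicative.ofAdd (1 : ZMod e)) = h := by
    intro e he h hhe
    have hFe : (zmultiplesHom (Additive H) (Additive.ofMul h)) (e : ℤ) = 0 := by
      show (e : ℤ) • Additive.ofMul h = 0
      rw [← ofMul_zpow, zpow_natCast, hhe]
      rfl
    set liftA : ZMod e →+ Additive H := ZMod.lift e ⟨_, hFe⟩ with hlift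
    refine ⟨{ toFun := fun x => (liftA x.toAdd).toMul
              map_one' := by
                show (liftA (0 : ZMod e)).toMul = 1
                rw [map_zero]; rfl
              map_mul' := fun x y => by
                show (liftA (x.toAdd + y.toAdd)).toMul = _
                rw [map_add]; rfl }, ?_, ?_⟩
    · intro x
      obtain ⟨c, hc⟩ := ZMod.intCast_surjective (n := e) x.toAdd
      refine ⟨c, ?_, ?_⟩
      · show (liftA x.toAdd).toMul = h ^ c
        rw [← hc, hlift, ZMod.lift_coe]
        show ((c : ℤ) • Additive.ofMul h).toMul = h ^ c
        rw [toMul_zsmul]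
        rfl
      · show x = Multiplicative.ofAdd ((c : ZMod e))
        rw [hc]
        rfl
    · show (liftA (((1 : ZMod e)))).toMul = h
      have h1 : ((1 : ℤ) : ZMod e) = (1 : ZMod e) := by push_cast; rfl
      rw [← h1, hlift, ZMod.lift_coe]
      simp
  obtain ⟨σA, hσA, hσA1⟩ := mkσ p _ hha
  obtain ⟨σB, hσB, hσB1⟩ := mkσ q _ hhb
  set s : G →* H := Coprod.lift σA σB with hs
  have hsinl : ∀ x, s (Coprod.inl x) = σA x := fun x => by
    rw [hs, Coprod.lift_apply_inl]
  have hsinr : ∀ y, s (Coprod.inr y) = σB y := fun y => by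
    rw [hs, Coprod.lift_apply_inr]
  have hright : ∀ g : G, (s g).right = g := by
    have : rightHom.comp s = MonoidHom.id G := by
      apply Coprod.hom_ext
      · refine MonoidHom.ext fun x => ?_
        show rightHom (s (Coprod.inl x)) = Coprod.inl x
        rw [hsinl]
        obtain ⟨c, hc1, hc2⟩ := hσA x
        rw [hc1, map_zpow]
        show ((⟨Multiplicative.ofAdd ma, agen p q⟩ : H).right) ^ c = Coprod.inl x
        show (agen p q) ^ c = Coprod.inl x
        rw [agen, ← map_zpow]
        congr 1
        rw [← ofAdd_zsmul]
        rw [hc2]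
        congr 1
        rw [zsmul_eq_mul, mul_one]
      · refine MonoidHom.ext fun y => ?_
        show rightHom (s (Coprod.inr y)) = Coprod.inr y
        rw [hsinr]
        obtain ⟨c, hc1, hc2⟩ := hσB y
        rw [hc1, map_zpow]
        show ((⟨Multiplicative.ofAdd mb, bgen p q⟩ : H).right) ^ c = Coprod.inr y
        show (bgen p q) ^ c = Coprod.inr y
        rw [bgen, ← map_zpow]
        congr 1
        rw [← ofAdd_zsmul]
        rw [hc2]
        congr 1
        rw [zsmul_eq_mul, mul_one]
    intro g
    show rightHom (s g) = g
    rw [← MonoidHom.comp_apply, this]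
    rfl
  refine ⟨fun g => ((s g).left).toAdd, ?_, ?_, ?_⟩
  · intro g h
    have hmul : s (g * h) = s g * s h := map_mul s g h
    have hleft : (s (g * h)).left = (s g).left * phi ((s g).right) ((s h).left) := by
      rw [hmul]; rfl
    have : ((s (g * h)).left).toAdd
        = ((s g).left).toAdd + rho g (((s h).left).toAdd) := by
      rw [hleft, hright g]
      rfl
    funext x
    exact congrFun this x
  · show ((s (Coprod.inl (Multiplicative.ofAdd (1 : ZMod p)))).left).toAdd = ma
    rw [hsinl, hσA1]
    rfl
  · show ((s (Coprod.inr (Multiplicative.ofAdd (1 : ZMod q)))).left).toAdd = mb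
    rw [hsinr, hσB1]
    rfl

end Der

end S15

namespace S15

open Monoid Module
open scoped Monoid.Coprod

set_option maxHeartbeats 2000000 in
theorem key (p q r : ℕ) [NeZero p] [NeZero q]
    (U : Subgroup (GG p q)) (hfin : U.FiniteIndex)
    (iso : U ≃* FreeGroup (Fin r)) :
    ∃ nA nB n : ℕ, n ≠ 0 ∧ n = nA * p ∧ n = nB * q ∧ n + 1 ≤ r + nA + nB := by
  classical
  haveI := hfin
  haveI : Fintype (GG p q ⧸ U) := Fintype.ofFinite _
  set X := GG p q ⧸ U with hX
  set x₀ : X := QuotientGroup.mk 1 with hx₀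
  -- U is torsion-free
  have hU_tf : ∀ (u : GG p q), u ∈ U → ∀ (m : ℕ), m ≠ 0 → u ^ m = 1 → u = 1 := by
    intro u hu m hm hum
    have h1 : (⟨u, hu⟩ : U) ^ m = 1 := by
      apply Subtype.ext
      push_cast
      exact hum
    have h2 : (iso ⟨u, hu⟩) ^ m = 1 := by rw [← map_pow, h1, map_one]
    have h3 : iso ⟨u, hu⟩ = 1 := FGTF.torsionfree m hm _ h2
    have h4 : (⟨u, hu⟩ : U) = 1 := by
      apply iso.injective; rw [h3, map_one]
    exact congrArg Subtype.val h4
  -- no nontrivial torsion element fixes a point of X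
  have hnofix : ∀ (w : GG p q) (m : ℕ), m ≠ 0 → w ^ m = 1 → w ≠ 1 →
      ∀ x : X, w • x ≠ x := by
    intro w m hm hwm hw1 x hfix
    have hx : QuotientGroup.mk x.out = x := QuotientGroup.out_eq' x
    set g := x.out with hg
    rw [← hx, MulAction.Quotient.smul_mk] at hfix
    have hu : (w • g)⁻¹ * g ∈ U := QuotientGroup.eq.mp hfix
    have hueq : (w • g)⁻¹ * g = (MulAut.conj g⁻¹) w⁻¹ := by
      simp [MulAut.conj, smul_eq_mul]
    have hupow : ((w • g)⁻¹ * g) ^ m = 1 := by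
      rw [hueq, ← map_pow, inv_pow, hwm, inv_one, map_one]
    have := hU_tf _ hu m hm hupow
    rw [hueq] at this
    have hw : w⁻¹ = 1 := by
      have := (MulAut.conj g⁻¹).injective (a₂ := 1) (by rw [this, map_one])
      exact this
    exact hw1 (by rw [← inv_inv w, hw, inv_one])
  -- free actions of the generators
  have hfreeA : ∀ k : ℕ, 0 < k → k < p → ∀ x : X, (agen p q) ^ k • x ≠ x := by
    intro k hk0 hkp x
    refine hnofix _ p (NeZero.ne p) ?_ ?_ x
    · rw [← pow_mul, mul_comm, pow_mul, agen_pow_p, one_pow]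
    · intro h1
      have h2 : (agen p q) ^ k = Coprod.inl (Multiplicative.ofAdd ((k : ZMod p))) := by
        rw [agen, ← map_pow, ofAdd_natCast]
      rw [h2] at h1
      have h3 : (Multiplicative.ofAdd ((k : ZMod p))) = 1 :=
        Coprod.inl_injective (by rw [h1, map_one])
      have h4 : ((k : ZMod p)) = 0 := h3
      rw [ZMod.natCast_eq_zero_iff] at h4
      exact absurd (Nat.le_of_dvd hk0 h4) (by omega)
  have hfreeB : ∀ k : ℕ, 0 < k → k < q → ∀ x : X, (bgen p q) ^ k • x ≠ x := by
    intro k hk0 hkq x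
    refine hnofix _ q (NeZero.ne q) ?_ ?_ x
    · rw [← pow_mul, mul_comm, pow_mul, bgen_pow_q, one_pow]
    · intro h1
      have h2 : (bgen p q) ^ k = Coprod.inr (Multiplicative.ofAdd ((k : ZMod q))) := by
        rw [bgen, ← map_pow, ofAdd_natCast]
      rw [h2] at h1
      have h3 : (Multiplicative.ofAdd ((k : ZMod q))) = 1 :=
        Coprod.inr_injective (by rw [h1, map_one])
      have h4 : ((k : ZMod q)) = 0 := h3
      rw [ZMod.natCast_eq_zero_iff] at h4
      exact absurd (Nat.le_of_dvd hk0 h4) (by omega)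
  obtain ⟨nA, hcardA, hrkA⟩ := orbit_op (X := X) (agen p q) p (NeZero.ne p) (agen_pow_p p q) hfreeA
  obtain ⟨nB, hcardB, hrkB⟩ := orbit_op (X := X) (bgen p q) q (NeZero.ne q) (bgen_pow_q p q) hfreeB
  set n := Fintype.card X with hn
  set NA := NN (X := X) (agen p q) p with hNA
  set NB := NN (X := X) (bgen p q) q with hNB
  set KA := LinearMap.ker NA with hKAdef
  set KB := LinearMap.ker NB with hKBdef
  have hMrank : finrank ℚ (X → ℚ) = n := by
    rw [Module.finrank_pi]
  have hKA : nA + finrank ℚ KA = n := by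
    have := LinearMap.finrank_range_add_finrank_ker NA
    rw [hrkA, hMrank] at this
    exact this
  have hKB : nB + finrank ℚ KB = n := by
    have := LinearMap.finrank_range_add_finrank_ker NB
    rw [hrkB, hMrank] at this
    exact this
  -- generators of U as elements of G
  set e : Fin r → GG p q := fun i => ((iso.symm (FreeGroup.of i) : U) : GG p q) with he
  -- derivations from pairs of kernel elements
  have hder : ∀ mm : KA × KB, ∃ d, IsCocycle d ∧ d (agen p q) = (mm.1 : X → ℚ)
      ∧ d (bgen p q) = (mm.2 : X → ℚ) :=
    fun mm => exists_der p q (mm.1 : X → ℚ) (mm.2 : X → ℚ)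
      (LinearMap.mem_ker.mp mm.1.2) (LinearMap.mem_ker.mp mm.2.2)
  choose Df hD1 hD2 hD3 using hder
  have Dadd : ∀ v w : KA × KB, Df (v + w) = Df v + Df w := by
    intro v w
    refine cocycle_ext p q (hD1 _) ((hD1 v).add (hD1 w)) ?_ ?_
    · rw [hD2, Pi.add_apply, hD2, hD2]
      push_cast
      rfl
    · rw [hD3, Pi.add_apply, hD3, hD3]
      push_cast
      rfl
  have Dsmul : ∀ (c : ℚ) (v : KA × KB), Df (c • v) = c • Df v := by
    intro c v
    refine cocycle_ext p q (hD1 _) ((hD1 v).smul c) ?_ ?_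
    · rw [hD2, Pi.smul_apply, hD2]
      push_cast
      rfl
    · rw [hD3, Pi.smul_apply, hD3]
      push_cast
      rfl
  set Φ : (KA × KB) →ₗ[ℚ] (Fin r → ℚ) :=
    { toFun := fun mm => fun i => Df mm (e i) x₀
      map_add' := fun v w => by
        funext i
        show Df (v + w) (e i) x₀ = Df v (e i) x₀ + Df w (e i) x₀
        rw [Dadd]
        rfl
      map_smul' := fun c v => by
        funext i
        show Df (c • v) (e i) x₀ = c • (Df v (e i) x₀)
        rw [Dsmul]
        rfl } with hΦ
  -- the coboundary map
  have hδA : ∀ m : X → ℚ, NA (rho (agen p q) m - m) = 0 := fun m =>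
    NN_coboundary (agen_pow_p p q) m
  have hδB : ∀ m : X → ℚ, NB (rho (bgen p q) m - m) = 0 := fun m =>
    NN_coboundary (bgen_pow_q p q) m
  set δ : (X → ℚ) →ₗ[ℚ] KA × KB :=
    LinearMap.prod
      (LinearMap.codRestrict KA (rho (agen p q) - LinearMap.id)
        (fun m => LinearMap.mem_ker.mpr (hδA m)))
      (LinearMap.codRestrict KB (rho (bgen p q) - LinearMap.id)
        (fun m => LinearMap.mem_ker.mpr (hδB m))) with hδ
  have hδap : ∀ m : X → ℚ, ((δ m).1 : X → ℚ) = rho (agen p q) m - m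
      ∧ ((δ m).2 : X → ℚ) = rho (bgen p q) m - m := by
    intro m
    constructor <;>
      simp only [hδ, LinearMap.prod_apply, Pi.prod, Function.prod, LinearMap.codRestrict_apply,
        LinearMap.sub_apply, LinearMap.id_apply]
  -- a cocycle vanishing on the generators at x₀ vanishes on U at x₀
  have hvanish : ∀ (d : GG p q → X → ℚ), IsCocycle d → (∀ i, d (e i) x₀ = 0) →
      ∀ u ∈ U, d u x₀ = 0 := by
    intro d hd hi u hu
    have hfix : ∀ v : GG p q, v ∈ U → v⁻¹ • x₀ = x₀ := by
      intro v hv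
      rw [hx₀, MulAction.Quotient.smul_mk]
      exact QuotientGroup.eq.mpr (by simpa using hv)
    have hhom : ∀ u₁ u₂ : U, d ((u₁ * u₂ : U) : GG p q) x₀ = d (u₁ : GG p q) x₀
        + d (u₂ : GG p q) x₀ := by
      intro u₁ u₂
      have h1 := congrFun (hd (u₁ : GG p q) (u₂ : GG p q)) x₀
      have h2 : rho (u₁ : GG p q) (d (u₂ : GG p q)) x₀ = d (u₂ : GG p q) x₀ := by
        rw [rho_apply, hfix _ u₁.2]
      simp only [Pi.add_apply] at h1
      rw [h2] at h1
      exact h1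
    set F : FreeGroup (Fin r) →* Multiplicative ℚ :=
      { toFun := fun wf => Multiplicative.ofAdd (d ((iso.symm wf : U) : GG p q) x₀)
        map_one' := by
          show Multiplicative.ofAdd (d ((iso.symm 1 : U) : GG p q) x₀) = 1
          rw [map_one]
          have h8 : ((1 : U) : GG p q) = 1 := rfl
          rw [h8]
          have h0 := congrFun hd.map_one x₀
          simp only [Pi.zero_apply] at h0
          rw [h0]
          rfl
        map_mul' := fun w₁ w₂ => by
          show Multiplicative.ofAdd (d ((iso.symm (w₁ * w₂) : U) : GG p q) x₀) = _
          rw [map_mul, hhom]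
          rfl } with hF
    have hF1 : F = 1 := by
      refine FreeGroup.ext_hom F 1 fun i => ?_
      show Multiplicative.ofAdd (d ((iso.symm (FreeGroup.of i) : U) : GG p q) x₀) = 1
      rw [show ((iso.symm (FreeGroup.of i) : U) : GG p q) = e i from rfl, hi i]
      rfl
    have h5 : F (iso ⟨u, hu⟩) = 1 := by rw [hF1]; rfl
    have h6 : Multiplicative.ofAdd (d u x₀) = 1 := by
      have h7 : ((iso.symm (iso ⟨u, hu⟩) : U) : GG p q) = u := by
        rw [MulEquiv.symm_apply_apply]
      rw [hF] at h5
      simpa [h7] using h5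
    have := congrArg Multiplicative.toAdd h6
    simpa using this
  -- a cocycle vanishing on U at x₀ is a coboundary
  have hinner : ∀ (d : GG p q → X → ℚ), IsCocycle d → (∀ u ∈ U, d u x₀ = 0) →
      ∃ m : X → ℚ, ∀ g, d g = rho g m - m := by
    intro d hd hv
    have hW : ∀ h h' : GG p q, QuotientGroup.mk h = (QuotientGroup.mk h' : X) →
        d h' (QuotientGroup.mk h) = d h (QuotientGroup.mk h) := by
      intro h h' hhh
      have hu : h⁻¹ * h' ∈ U := QuotientGroup.eq.mp hhh
      have hh' : h' = h * (h⁻¹ * h') := by group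
      rw [hh']
      have h1 := congrFun (hd h (h⁻¹ * h')) (QuotientGroup.mk h : X)
      have h2 : rho h (d (h⁻¹ * h')) (QuotientGroup.mk h : X) = 0 := by
        rw [rho_apply]
        have h3 : h⁻¹ • (QuotientGroup.mk h : X) = x₀ := by
          rw [MulAction.Quotient.smul_mk, hx₀]
          congr 1
          rw [smul_eq_mul]
          group
        rw [h3]
        exact hv (h⁻¹ * h') hu
      rw [h1, Pi.add_apply, h2, add_zero]
    set m : X → ℚ := fun x => - d x.out x with hm
    have hmmk : ∀ h : GG p q, m (QuotientGroup.mk h) = - d h (QuotientGroup.mk h) := by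
      intro h
      show - d ((QuotientGroup.mk h : X)).out (QuotientGroup.mk h) = _
      rw [hW h ((QuotientGroup.mk h : X)).out (QuotientGroup.out_eq' _).symm]
    refine ⟨m, ?_⟩
    intro g
    funext x
    have hx : QuotientGroup.mk x.out = x := QuotientGroup.out_eq' x
    set h := x.out with hh
    have h1 : g⁻¹ • x = (QuotientGroup.mk (g⁻¹ * h) : X) := by
      rw [← hx, MulAction.Quotient.smul_mk]
      rfl
    have h2 : m (g⁻¹ • x) = - d (g⁻¹ * h) (QuotientGroup.mk (g⁻¹ * h)) := by
      rw [h1, hmmk]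
    have h3 := congrFun (hd g⁻¹ h) (QuotientGroup.mk (g⁻¹ * h) : X)
    have h4 : d g⁻¹ (QuotientGroup.mk (g⁻¹ * h) : X) = - d g (QuotientGroup.mk h : X) := by
      have h5 := congrFun (hd.map_inv g) (QuotientGroup.mk (g⁻¹ * h) : X)
      rw [h5, Pi.neg_apply, rho_apply, inv_inv]
      have h9 : g • (QuotientGroup.mk (g⁻¹ * h) : X) = QuotientGroup.mk h := by
        rw [MulAction.Quotient.smul_mk]
        congr 1
        rw [smul_eq_mul]
        group
      rw [h9]
    have h6 : rho g⁻¹ (d h) (QuotientGroup.mk (g⁻¹ * h) : X) = d h (QuotientGroup.mk h : X) := by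
      rw [rho_apply]
      congr 1
      rw [inv_inv, MulAction.Quotient.smul_mk]
      congr 1
      rw [smul_eq_mul]
      group
    have h7 : m x = - d h (QuotientGroup.mk h : X) := by
      rw [← hx, hmmk]
    show d g x = rho g m x - m x
    rw [rho_apply, h2, h7, h3, Pi.add_apply, h4, h6, ← hx]
    ring
  -- kernel of Φ is contained in the range of δ
  have hker : LinearMap.ker Φ ≤ LinearMap.range δ := by
    rintro mm hmm
    have h0 : ∀ i, Df mm (e i) x₀ = 0 := by
      intro i
      have := LinearMap.mem_ker.mp hmm
      exact congrFun this i
    obtain ⟨m, hm⟩ := hinner (Df mm) (hD1 mm) (hvanish (Df mm) (hD1 mm) h0)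
    refine ⟨m, ?_⟩
    have hA : ((δ m).1 : X → ℚ) = (mm.1 : X → ℚ) := by
      rw [(hδap m).1, ← hD2 mm, hm]
    have hB : ((δ m).2 : X → ℚ) = (mm.2 : X → ℚ) := by
      rw [(hδap m).2, ← hD3 mm, hm]
    exact Prod.ext (Subtype.ext hA) (Subtype.ext hB)
  -- dimension count
  have hrn1 : finrank ℚ (LinearMap.range Φ) + finrank ℚ (LinearMap.ker Φ)
      = finrank ℚ KA + finrank ℚ KB := by
    rw [LinearMap.finrank_range_add_finrank_ker Φ, Module.finrank_prod]
  have hΦle : finrank ℚ (LinearMap.range Φ) ≤ r := by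
    refine le_trans (Submodule.finrank_le _) ?_
    rw [Module.finrank_pi, Fintype.card_fin]
  have hkerle : finrank ℚ (LinearMap.ker Φ) ≤ finrank ℚ (LinearMap.range δ) :=
    Submodule.finrank_mono hker
  have hrn2 : finrank ℚ (LinearMap.range δ) + finrank ℚ (LinearMap.ker δ) = n := by
    rw [LinearMap.finrank_range_add_finrank_ker δ, hMrank]
  have h1le : 1 ≤ finrank ℚ (LinearMap.ker δ) := by
    have hmem : (fun _ => (1 : ℚ) : X → ℚ) ∈ LinearMap.ker δ := by
      rw [LinearMap.mem_ker]
      have hA : ((δ (fun _ => (1 : ℚ))).1 : X → ℚ) = 0 := by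
        rw [(hδap _).1]
        funext y
        simp
      have hB : ((δ (fun _ => (1 : ℚ))).2 : X → ℚ) = 0 := by
        rw [(hδap _).2]
        funext y
        simp
      exact Prod.ext (Subtype.ext hA) (Subtype.ext hB)
    have hne : ((⟨(fun _ => (1 : ℚ) : X → ℚ), hmem⟩ : LinearMap.ker δ)) ≠ 0 := by
      intro hcon
      have := congrArg Subtype.val hcon
      have h9 := congrFun this x₀
      norm_num at h9
    haveI : Nontrivial (LinearMap.ker δ) := nontrivial_of_ne _ _ hne
    have := Module.finrank_pos (R := ℚ) (M := LinearMap.ker δ)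
    omega
  refine ⟨nA, nB, n, ?_, hcardA, hcardB, ?_⟩
  · have : Nonempty X := ⟨x₀⟩
    exact Fintype.card_ne_zero
  · omega

end S15

open Monoid
open scoped Monoid.Coprod

/-- A finite-index free subgroup of rank `r` of `ℤ/p ∗ ℤ/q` (p, q coprime,
`2 ≤ q < p`) satisfies `1 − r ≤ −pq + p + q`; in particular `r ≥ q`, i.e. a
free subgroup of rank `< q` cannot have finite index. -/
theorem stmt_15 (p q : ℕ) (hcop : Nat.Coprime p q) (hq : 2 ≤ q) (hqp : q < p)
    (U : Subgroup (Multiplicative (ZMod p) ∗ Multiplicative (ZMod q)))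
    (hfin : U.FiniteIndex) (r : ℕ)
    (hfree : Nonempty (U ≃* FreeGroup (Fin r))) :
    ((1 : ℤ) - r ≤ -(p * q : ℤ) + p + q) ∧ ¬ r < q := by
  haveI : NeZero p := ⟨by omega⟩
  haveI : NeZero q := ⟨by omega⟩
  obtain ⟨iso⟩ := hfree
  obtain ⟨nA, nB, n, hn0, hA, hB, hineq⟩ := S15.key p q r U hfin iso
  have hpdvd : p ∣ n := Dvd.intro_left nA hA.symm
  have hqdvd : q ∣ n := Dvd.intro_left nB hB.symm
  have hpq : p * q ∣ n := Nat.Coprime.mul_dvd_of_dvd_of_dvd hcop hpdvd hqdvd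
  obtain ⟨t, ht⟩ := hpq
  have ht1 : 1 ≤ t := by
    rcases Nat.eq_zero_or_pos t with rfl | hpos
    · exfalso; exact hn0 (by omega)
    · exact hpos
  have hnA : nA = q * t := by
    have h1 : nA * p = (q * t) * p := by
      rw [← hA, ht]; ring
    exact Nat.eq_of_mul_eq_mul_right (by omega) h1
  have hnB : nB = p * t := by
    have h1 : nB * q = (p * t) * q := by
      rw [← hB, ht]; ring
    exact Nat.eq_of_mul_eq_mul_right (by omega) h1
  -- now pass to integers
  have hZ : (p : ℤ) * q * t + 1 ≤ (r : ℤ) + q * t + p * t := by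
    have := hineq
    rw [ht, hnA, hnB] at this
    exact_mod_cast this
  have hp3 : (3 : ℤ) ≤ (p : ℤ) := by exact_mod_cast (by omega : 3 ≤ p)
  have hq2 : (2 : ℤ) ≤ (q : ℤ) := by exact_mod_cast hq
  have ht1' : (1 : ℤ) ≤ (t : ℤ) := by exact_mod_cast ht1
  have hpqZ : (p : ℤ) + q ≤ (p : ℤ) * q := by nlinarith
  have hmain : (1 : ℤ) + (p : ℤ) * q - p - q ≤ (r : ℤ) := by
    nlinarith [mul_nonneg (sub_nonneg.2 ht1') (sub_nonneg.2 hpqZ)]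
  constructor
  · linarith
  · rw [not_lt]
    have : (q : ℤ) ≤ (r : ℤ) := by nlinarith
    exact_mod_cast this
end
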